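/- Let γ, k > 0 and let λ_lin < 0 and c_lin > 0 satisfy 3λ_lin² + 2λ_lin c_lin - (1+γk) = 0 and λ_lin³ + c_lin λ_lin² - (1+γk)λ_lin - k/c_lin = 0. Then 3λ_lin² = -(1+γk) + 2√((1+γk)² + 3k) and λ_lin c_lin = (1+γk) - √((1+γk)² + 3k). -/
import Mathlib


theorem stmt_12 (γ k lamLin cLin : ℝ) (hγ : 0 < γ) (hk : 0 < k)
    (hlam : lamLin < 0) (hc : 0 < cLin)
    (h1 : 3 * lamLin^2 + 2 * lamLin * cLin - (1 + γ * k) = 0)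
    (h2 : lamLin^3 + cLin * lamLin^2 - (1 + γ * k) * lamLin - k / cLin = 0) :
    3 * lamLin^2 = -(1 + γ * k) + 2 * Real.sqrt ((1 + γ * k)^2 + 3 * k) ∧
    lamLin * cLin = (1 + γ * k) - Real.sqrt ((1 + γ * k)^2 + 3 * k) := by
  set a := 1 + γ * k with ha
  set s := Real.sqrt (a ^ 2 + 3 * k) with hs
  have hc0 : cLin ≠ 0 := ne_of_gt hc
  have hs2 : s ^ 2 = a ^ 2 + 3 * k := Real.sq_sqrt (by nlinarith)
  have hsgt : a < s := by
    nlinarith [Real.sqrt_nonneg (a ^ 2 + 3 * k), hs2, hγ.le, hk.le]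
  have hu : lamLin ^ 3 * cLin + (lamLin * cLin) ^ 2 - a * (lamLin * cLin) - k = 0 := by
    have := h2
    field_simp at this
    nlinarith [this]
  have hquad : (lamLin * cLin) ^ 2 - 2 * a * (lamLin * cLin) - 3 * k = 0 := by
    nlinarith [h1, hu, mul_pos hk hγ]
  have hfac : (lamLin * cLin - (a - s)) * (lamLin * cLin - (a + s)) = 0 := by
    nlinarith [hquad, hs2]
  have hu2 : lamLin * cLin = a - s := by
    rcases mul_eq_zero.1 hfac with h | h
    · linarith
    · exfalso
      have : lamLin * cLin < 0 := mul_neg_of_neg_of_pos hlam hc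
      nlinarith
  refine ⟨by linarith [h1, hu2], hu2⟩
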